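/- arXiv:2603.15567 — 5 statements merged into one kernel-verified Lean document; each statement's English description precedes it below -/
import Mathlib

section
/- Let B be a family of increasing functions from ω^{<ω} to ω such that for every n ∈ ω the set {f ∈ B : f(∅) > n} is cofinal in (B, ≤*), i.e., for every g ∈ B there is f ∈ B with f(∅) > n and g ≤* f. Then for every s ∈ ω^{<ω}, the set {f ∈ B : s ∈ U(f)} is cofinal in (B, ≤*). -/
/-- `U(f) = {s ∈ ω^{<ω} : f(s↾i) ≠ s(i) for all i < |s|}`. -/
def UF (f : List ℕ → ℕ) : Set (List ℕ) :=
  {s | ∀ i (h : i < s.length), f (s.take i) ≠ s.get ⟨i, h⟩}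

/-- `f : ω^{<ω} → ω` is increasing. -/
def Increasing (f : List ℕ → ℕ) : Prop :=
  (∀ s t : List ℕ, s <+: t → s ≠ t → f s < f t) ∧
  (∀ (s : List ℕ) (n m : ℕ), n < m → f (s ++ [n]) < f (s ++ [m]))

/-- `g ≤* f`: `g s ≤ f s` for all but finitely many `s ∈ ω^{<ω}`. -/
def EvLE (g f : List ℕ → ℕ) : Prop := {s : List ℕ | ¬ g s ≤ f s}.Finite

/-- If `B` is a family of increasing functions `ω^{<ω} → ω` such that for
every `n` the set `{f ∈ B : f(∅) > n}` is `≤*`-cofinal in `B`, then for every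
`s ∈ ω^{<ω}` the set `{f ∈ B : s ∈ U(f)}` is `≤*`-cofinal in `B`. -/
theorem stmt_4 (B : Set (List ℕ → ℕ)) (hinc : ∀ f ∈ B, Increasing f)
    (hcof : ∀ n : ℕ, ∀ g ∈ B, ∃ f ∈ B, n < f [] ∧ EvLE g f) :
    ∀ s : List ℕ, ∀ g ∈ B, ∃ f ∈ B, s ∈ UF f ∧ EvLE g f := by
  intro s g hg
  obtain ⟨f, hfB, hf0, hle⟩ := hcof s.sum g hg
  refine ⟨f, hfB, ?_, hle⟩
  intro i h
  have hmem : s.get ⟨i, h⟩ ∈ s := s.get_mem ⟨i, h⟩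
  have h1 : s.get ⟨i, h⟩ ≤ s.sum :=
    List.single_le_sum (fun x _ => Nat.zero_le x) _ hmem
  have h2 : s.get ⟨i, h⟩ < f (s.take i) := by
    rcases eq_or_ne (s.take i) [] with he | he
    · rw [he]; omega
    · have := (hinc f hfB).1 [] (s.take i) (List.nil_prefix) (Ne.symm he)
      omega
  exact (Nat.ne_of_lt h2).symm
end

section
/- Let F be a finite family of functions from ω^{<ω} to ω such that any two distinct members f ≠ g of F are eventually different, i.e., f(s) ≠ g(s) for all but finitely many s ∈ ω^{<ω}. Then the map sending a subset C ⊆ F to the intersection ⋂_{f∈C} U(f) (where the empty intersection is all of ω^{<ω}) is injective: if C₁, C₂ ⊆ F and C₁ ≠ C₂, then ⋂_{f∈C₁} U(f) ≠ ⋂_{f∈C₂} U(f). -/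
/-- Auxiliary sequence: repeatedly append `v` of the current list. -/
def tseq (v : List ℕ → ℕ) : ℕ → List ℕ
  | 0 => []
  | n + 1 => tseq v n ++ [v (tseq v n)]

lemma tseq_length (v : List ℕ → ℕ) : ∀ n, (tseq v n).length = n
  | 0 => rfl
  | n + 1 => by simp [tseq, tseq_length v n]

lemma tseq_take (v : List ℕ → ℕ) : ∀ n i, i ≤ n → (tseq v n).take i = tseq v i
  | 0, i, hi => by simp_all [tseq]
  | n + 1, i, hi => by
    rcases Nat.lt_or_ge i (n + 1) with h | h
    · have hi' : i ≤ n := Nat.lt_succ_iff.mp h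
      have : i ≤ (tseq v n).length := by rw [tseq_length]; exact hi'
      simp [tseq, List.take_append_of_le_length this, tseq_take v n i hi']
    · have : i = n + 1 := le_antisymm hi h
      subst this
      exact List.take_of_length_le (le_of_eq (tseq_length v (n+1)))

lemma tseq_get (v : List ℕ → ℕ) (n i : ℕ) (h : i < n)
    (h' : i < (tseq v n).length) : (tseq v n).get ⟨i, h'⟩ = v (tseq v i) := by
  induction n with
  | zero => omega
  | succ m ih =>
    rcases Nat.lt_or_ge i m with hm | hm
    · have hlen : i < (tseq v m).length := by rw [tseq_length]; exact hm
      have : (tseq v (m+1)).get ⟨i, h'⟩ = (tseq v m).get ⟨i, hlen⟩ := by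
        simp only [tseq, List.get_eq_getElem]
        exact List.getElem_append_left hlen
      rw [this, ih hm hlen]
    · have : i = m := by omega
      subst this
      simp only [tseq, List.get_eq_getElem]
      exact List.getElem_concat_length (tseq_length v i).symm _

lemma key (C₂ : Finset (List ℕ → ℕ)) (f : List ℕ → ℕ)
    (hed : ∀ g ∈ C₂, {s : List ℕ | f s = g s}.Finite) :
    ∃ s, s ∈ (⋂ g ∈ C₂, UF g) ∧ s ∉ UF f := by
  classical
  obtain ⟨v, hvne⟩ : ∃ v : List ℕ → ℕ, ∀ g ∈ C₂, ∀ p, g p ≠ v p := by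
    refine ⟨fun p => (C₂.image (fun g => g p)).sup id + 1, fun g hg p => ?_⟩
    have : g p ≤ (C₂.image (fun g => g p)).sup id :=
      Finset.le_sup (f := id) (Finset.mem_image_of_mem _ hg)
    exact Nat.ne_of_lt (Nat.lt_succ_of_le this)
  -- the exceptional set
  have hE : (⋃ g ∈ C₂, {s : List ℕ | f s = g s}).Finite :=
    Set.Finite.biUnion C₂.finite_toSet (fun g hg => hed g hg)
  -- prefixes are infinite
  have hinj : Function.Injective (tseq v) := by
    intro a b hab
    have := congrArg List.length hab
    rwa [tseq_length, tseq_length] at this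
  have hinf : (Set.range (tseq v)).Infinite := Set.infinite_range_of_injective hinj
  obtain ⟨p, hpmem, hpE⟩ := (hinf.diff hE).nonempty
  obtain ⟨n, rfl⟩ := hpmem
  set p := tseq v n with hp
  -- f p ≠ g p for all g ∈ C₂
  have hfg : ∀ g ∈ C₂, f p ≠ g p := by
    intro g hg h
    exact hpE (Set.mem_biUnion hg h)
  refine ⟨p ++ [f p], ?_, ?_⟩
  · rw [Set.mem_iInter₂]
    intro g hg
    intro i hi
    have hlen : (p ++ [f p]).length = n + 1 := by simp [hp, tseq_length]
    rw [hlen] at hi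
    rcases Nat.lt_or_ge i n with hin | hin
    · have hlp : i < p.length := by rw [hp, tseq_length]; exact hin
      have htake : (p ++ [f p]).take i = tseq v i := by
        rw [List.take_append_of_le_length (le_of_lt hlp), hp,
          tseq_take v n i (le_of_lt hin)]
      have hget : (p ++ [f p]).get ⟨i, by omega⟩ = v (tseq v i) := by
        simp only [List.get_eq_getElem]
        rw [List.getElem_append_left hlp]
        exact tseq_get v n i hin hlp
      rw [htake, hget]
      exact fun h => hvne g hg (tseq v i) h
    · have : i = n := by omega
      subst this
      have hlp : p.length = i := by rw [hp, tseq_length]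
      have htake : (p ++ [f p]).take i = p := by
        rw [← hlp, List.take_left]
      have hget : (p ++ [f p]).get ⟨i, by omega⟩ = f p := by
        simp only [List.get_eq_getElem]
        exact List.getElem_concat_length hlp.symm (by omega)
      rw [htake, hget]
      exact fun h => hfg g hg h.symm
  · intro hmem
    have hlen : (p ++ [f p]).length = n + 1 := by simp [hp, tseq_length]
    have hn : n < (p ++ [f p]).length := by omega
    have hlp : p.length = n := by rw [hp, tseq_length]
    have htake : (p ++ [f p]).take n = p := by rw [← hlp, List.take_left]
    have hget : (p ++ [f p]).get ⟨n, hn⟩ = f p := by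
      simp only [List.get_eq_getElem]
      exact List.getElem_concat_length hlp.symm (by omega)
    exact hmem n hn (by rw [htake, hget])

/-- If `F` is a finite family of functions `ω^{<ω} → ω` whose distinct
members are pairwise eventually different, then `C ↦ ⋂_{f ∈ C} U(f)` is injective on
subsets of `F` (the empty intersection being all of `ω^{<ω}`). -/
theorem stmt_10 (F : Finset (List ℕ → ℕ))
    (hed : ∀ f ∈ F, ∀ g ∈ F, f ≠ g → {s : List ℕ | f s = g s}.Finite) :
    ∀ C₁ C₂ : Finset (List ℕ → ℕ), C₁ ⊆ F → C₂ ⊆ F → C₁ ≠ C₂ →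
      (⋂ f ∈ C₁, UF f) ≠ (⋂ f ∈ C₂, UF f) := by
  have main : ∀ C₁ C₂ : Finset (List ℕ → ℕ), C₁ ⊆ F → C₂ ⊆ F →
      (∃ f ∈ C₁, f ∉ C₂) → (⋂ f ∈ C₁, UF f) ≠ (⋂ f ∈ C₂, UF f) := by
    intro C₁ C₂ h₁ h₂ ⟨f, hf₁, hf₂⟩ heq
    obtain ⟨s, hs₂, hsf⟩ := key C₂ f (fun g hg =>
      hed f (h₁ hf₁) g (h₂ hg) (fun h => hf₂ (h ▸ hg)))
    have hs₁ : s ∈ ⋂ f ∈ C₁, UF f := heq ▸ hs₂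
    exact hsf (Set.mem_iInter₂.mp hs₁ f hf₁)
  intro C₁ C₂ h₁ h₂ hne
  by_cases h : C₁ ⊆ C₂
  · have h' : ¬ C₂ ⊆ C₁ := fun h' => hne (Finset.Subset.antisymm h h')
    obtain ⟨f, hf₁, hf₂⟩ := Finset.not_subset.mp h'
    exact fun heq => main C₂ C₁ h₂ h₁ ⟨f, hf₁, hf₂⟩ heq.symm
  · obtain ⟨f, hf₁, hf₂⟩ := Finset.not_subset.mp h
    exact main C₁ C₂ h₁ h₂ ⟨f, hf₁, hf₂⟩
end

section
/- Let {h_i : i ∈ ω} be a countable family of functions from ω^{<ω} to ω, let g : ω^{<ω} → ω, and let y : ℕ → {0,1}. Then there exists an increasing function f : ω^{<ω} → ω such that h_i <* f for every i ∈ ω, g <* f, f(∅) > g(∅), and for every n ∈ ℕ the value f(⟨0,…,0⟩) at the sequence of n zeros is congruent to y(n) modulo 2. -/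
/-- `h <* f`: `h s < f s` for all but finitely many `s ∈ ω^{<ω}`. -/
def EvLT (h f : List ℕ → ℕ) : Prop := {s : List ℕ | ¬ h s < f s}.Finite

section Aux

variable (H : List ℕ → ℕ)

/-- Auxiliary recursion on reversed lists. -/
def Caux : List ℕ → ℕ
  | [] => H [] + 1
  | (0 :: r) => Caux r + H ((0 :: r).reverse) + 1
  | ((n+1) :: r) => Caux (n :: r) + H (((n+1) :: r).reverse) + 1
termination_by l => (l.length, l.headI)

lemma Caux_lt_cons (n : ℕ) (r : List ℕ) : Caux H r < Caux H (n :: r) := by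
  induction n with
  | zero => rw [Caux]; omega
  | succ k ih => rw [Caux]; omega

lemma Caux_head_lt (r : List ℕ) {n m : ℕ} (hnm : n < m) :
    Caux H (n :: r) < Caux H (m :: r) := by
  induction m with
  | zero => omega
  | succ k ih =>
    rcases Nat.lt_succ_iff_lt_or_eq.mp hnm with hk | hk
    · have := ih hk
      have : Caux H (k :: r) < Caux H ((k+1) :: r) := by rw [Caux]; omega
      omega
    · subst hk; rw [Caux]; omega

lemma Caux_ge (r : List ℕ) : H r.reverse + 1 ≤ Caux H r := by
  match r with
  | [] => rw [Caux]; simp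
  | (0 :: r) => rw [Caux]; omega
  | ((n+1) :: r) => rw [Caux]; omega

/-- The base function. -/
def Baux (t : List ℕ) : ℕ := Caux H t.reverse

lemma Baux_ge (t : List ℕ) : H t + 1 ≤ Baux H t := by
  simpa [Baux] using Caux_ge H t.reverse

lemma Baux_append_lt (s : List ℕ) (n : ℕ) : Baux H s < Baux H (s ++ [n]) := by
  simpa [Baux] using Caux_lt_cons H n s.reverse

lemma Baux_last_lt (s : List ℕ) {n m : ℕ} (hnm : n < m) :
    Baux H (s ++ [n]) < Baux H (s ++ [m]) := by
  simpa [Baux] using Caux_head_lt H s.reverse hnm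

lemma Baux_prefix_lt : ∀ t s : List ℕ, s <+: t → s ≠ t → Baux H s < Baux H t := by
  intro t
  induction t using List.reverseRecOn with
  | nil => intro s hp hne; exact absurd (List.prefix_nil.mp hp) hne
  | append_singleton t' a ih =>
    intro s hp hne
    rcases lt_or_ge s.length (t'.length + 1) with hl | hl
    · have hst' : s <+: t' := by
        have := List.prefix_of_prefix_length_le hp (List.prefix_append t' [a]) ?_
        · exact this
        · simpa using Nat.lt_succ_iff.mp (by simpa using hl)
      rcases eq_or_ne s t' with rfl | hne'
      · exact Baux_append_lt H s a
      · exact (ih s hst' hne').trans (Baux_append_lt H t' a)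
    · have hle := hp.length_le
      simp at hle
      exact absurd (hp.eq_of_length (by simp; omega)) hne
end Aux

lemma finite_fixedlen (k i : ℕ) :
    {s : List ℕ | s.length = k ∧ ∀ x ∈ s, x < i}.Finite := by
  have hsub : {s : List ℕ | s.length = k ∧ ∀ x ∈ s, x < i} ⊆
      (fun v : Fin k → Fin i => List.ofFn (fun j => (v j : ℕ))) '' Set.univ := by
    rintro s ⟨hlen, hmem⟩
    subst hlen
    exact ⟨fun j => ⟨s.get j, hmem _ (List.get_mem s j)⟩, trivial, by simp⟩
  exact (Set.finite_univ.image _).subset hsub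

lemma finite_short (i : ℕ) : {s : List ℕ | s.length < i ∧ s.sum < i}.Finite := by
  have hsub : {s : List ℕ | s.length < i ∧ s.sum < i} ⊆
      ⋃ k ∈ Finset.range i, {s : List ℕ | s.length = k ∧ ∀ x ∈ s, x < i} := by
    rintro s ⟨h1, h2⟩
    simp only [Set.mem_iUnion, Finset.mem_range]
    exact ⟨s.length, h1, rfl, fun x hx =>
      lt_of_le_of_lt (List.single_le_sum (fun _ _ => Nat.zero_le _) _ hx) h2⟩
  exact (Set.Finite.biUnion (Finset.range i).finite_toSet
    fun k _ => finite_fixedlen k i).subset hsub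

/-- Given countably many functions `h_i : ω^{<ω} → ω`, a function `g`,
and `y : ℕ → {0,1}`, there is an increasing `f` with `h_i <* f` for all `i`, `g <* f`,
`f(∅) > g(∅)`, and `f(⟨0,…,0⟩) ≡ y(n) (mod 2)` for the sequence of `n` zeros. -/
theorem stmt_11 (h : ℕ → List ℕ → ℕ) (g : List ℕ → ℕ) (y : ℕ → ℕ)
    (hy : ∀ n, y n ≤ 1) :
    ∃ f : List ℕ → ℕ, Increasing f ∧
      (∀ i : ℕ, EvLT (h i) f) ∧
      EvLT g f ∧
      g [] < f [] ∧
      ∀ n : ℕ, f (List.replicate n 0) % 2 = y n := by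
  set HH : List ℕ → ℕ :=
    fun s => g s + (Finset.range (max s.length s.sum + 1)).sup (fun i => h i s) + 1 with hHH
  set eps : List ℕ → ℕ :=
    fun s => if s = List.replicate s.length 0 then y s.length else 0 with heps
  have heps_le : ∀ s, eps s ≤ 1 := by
    intro s
    simp only [heps]
    split
    · exact hy _
    · omega
  set f : List ℕ → ℕ := fun s => 2 * Baux HH s + eps s with hf
  have hBH : ∀ s, HH s + 1 ≤ Baux HH s := fun s => Baux_ge HH s
  have hfe : ∀ s, HH s < f s := by
    intro s
    have h1 := hBH s
    simp only [hf]
    omega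
  have hgf : ∀ s, g s < f s := by
    intro s
    have h1 := hBH s
    have : g s < HH s := by simp only [hHH]; omega
    simp only [hf]
    omega
  refine ⟨f, ⟨?_, ?_⟩, ?_, ?_, hgf [], ?_⟩
  · intro s t hp hne
    have hB := Baux_prefix_lt HH t s hp hne
    have h1 := heps_le s
    simp only [hf]
    omega
  · intro s n m hnm
    have hB := Baux_last_lt HH s hnm
    have h1 := heps_le (s ++ [n])
    simp only [hf]
    omega
  · intro i
    refine (finite_short i).subset ?_
    intro s hs
    simp only [Set.mem_setOf_eq] at hs ⊢
    by_contra hcon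
    have hi : i ≤ max s.length s.sum := by
      rcases Nat.lt_or_ge s.length i with h1 | h1
      · rcases Nat.lt_or_ge s.sum i with h2 | h2
        · exact absurd ⟨h1, h2⟩ hcon
        · omega
      · omega
    have hmem : i ∈ Finset.range (max s.length s.sum + 1) :=
      Finset.mem_range.mpr (by omega)
    have hsup : h i s ≤ (Finset.range (max s.length s.sum + 1)).sup (fun j => h j s) :=
      Finset.le_sup (f := fun j => h j s) hmem
    have h2 : h i s < HH s := by
      simp only [hHH]
      omega
    exact hs (h2.trans (hfe s))
  · show {s : List ℕ | ¬ g s < f s}.Finite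
    have he : {s : List ℕ | ¬ g s < f s} = ∅ := by
      ext s; simp [hgf s]
    rw [he]
    exact Set.finite_empty
  · intro n
    have hcond : List.replicate n 0 = List.replicate (List.replicate n 0).length 0 := by simp
    have h1 := hy n
    simp only [hf, heps, List.length_replicate, if_true]
    omega
end

section
/- Let I be an ideal on a countable set X. Suppose that for every Y ∈ I⁺, Player II has a winning strategy in the game G_Cat(I↾Y). Then I ≤_K nwd: there exists a function f : ℚ → X such that f⁻¹(A) is nowhere dense in ℚ for every A ∈ I. -/
open Classical Set

noncomputable section
namespace S14

def al : ℝ := Real.sqrt 2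

lemma al_irr : Irrational al := irrational_sqrt_two

abbrev Dy := ℕ × ℤ

def lo (d : Dy) : ℝ := al + (d.2 : ℝ) / 2 ^ d.1
def hi (d : Dy) : ℝ := al + ((d.2 : ℝ) + 1) / 2 ^ d.1

def tr (d : Dy) : Set ℚ := {q : ℚ | lo d < (q : ℝ) ∧ (q : ℝ) < hi d}

lemma lo_lt_hi (d : Dy) : lo d < hi d := by
  have h : (0:ℝ) < 2 ^ d.1 := by positivity
  unfold lo hi
  have : (d.2 : ℝ) / 2 ^ d.1 < ((d.2 : ℝ) + 1) / 2 ^ d.1 :=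
    div_lt_div_of_pos_right (by linarith) h
  linarith

lemma hi_sub_lo (d : Dy) : hi d - lo d = 1 / 2 ^ d.1 := by
  unfold lo hi; field_simp; ring

lemma tr_nonempty (d : Dy) : (tr d).Nonempty := by
  obtain ⟨q, hq⟩ := exists_rat_btwn (lo_lt_hi d)
  exact ⟨q, hq⟩

lemma lo_irr (d : Dy) : Irrational (lo d) := by
  have : lo d = al + ((d.2 / 2 ^ d.1 : ℚ) : ℝ) := by
    unfold lo; push_cast; ring
  rw [this]
  exact Irrational.add_ratCast (h := al_irr) _

lemma hi_irr (d : Dy) : Irrational (hi d) := by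
  have : hi d = al + (((d.2 + 1) / 2 ^ d.1 : ℚ) : ℝ) := by
    unfold hi; push_cast; ring
  rw [this]
  exact Irrational.add_ratCast (h := al_irr) _

lemma ne_lo (d : Dy) (q : ℚ) : (q : ℝ) ≠ lo d := fun h => (lo_irr d) ⟨q, h⟩
lemma ne_hi (d : Dy) (q : ℚ) : (q : ℝ) ≠ hi d := fun h => (hi_irr d) ⟨q, h⟩

lemma tr_open (d : Dy) : IsOpen (tr d) := by
  have h1 : IsOpen {q : ℚ | lo d < (q:ℝ)} :=
    (isOpen_lt' (lo d)).preimage Rat.continuous_coe_real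
  have h2 : IsOpen {q : ℚ | (q:ℝ) < hi d} :=
    (isOpen_gt' (hi d)).preimage Rat.continuous_coe_real
  exact h1.inter h2

lemma tr_closed (d : Dy) : IsClosed (tr d) := by
  rw [← isOpen_compl_iff]
  have : (tr d)ᶜ = {q : ℚ | (q:ℝ) < lo d} ∪ {q : ℚ | hi d < (q:ℝ)} := by
    ext q
    simp only [tr, mem_compl_iff, mem_setOf_eq, mem_union, not_and_or, not_lt]
    constructor
    · rintro (h | h)
      · exact Or.inl (h.lt_of_ne ((ne_lo d q).symm ∘ Eq.symm))
      · exact Or.inr (h.lt_of_ne ((ne_hi d q) ∘ Eq.symm))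
    · rintro (h | h)
      · exact Or.inl h.le
      · exact Or.inr h.le
  rw [this]
  exact ((isOpen_gt' (lo d)).preimage Rat.continuous_coe_real).union
    ((isOpen_lt' (hi d)).preimage Rat.continuous_coe_real)

def leftD (d : Dy) : Dy := (d.1 + 1, 2 * d.2)
def rightD (d : Dy) : Dy := (d.1 + 1, 2 * d.2 + 1)

lemma lo_leftD (d : Dy) : lo (leftD d) = lo d := by
  unfold lo leftD; push_cast
  have h : (2:ℝ) ^ (d.1+1) = 2 * 2 ^ d.1 := by ring
  rw [h]; field_simp

lemma hi_rightD (d : Dy) : hi (rightD d) = hi d := by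
  unfold hi rightD; push_cast
  have h : (2:ℝ) ^ (d.1+1) = 2 * 2 ^ d.1 := by ring
  rw [h]; field_simp; ring

lemma hi_leftD_eq_lo_rightD (d : Dy) : hi (leftD d) = lo (rightD d) := by
  unfold hi lo leftD rightD; push_cast; ring_nf

lemma lo_le_lo_rightD (d : Dy) : lo d ≤ lo (rightD d) := by
  unfold lo rightD; push_cast
  have h : (2:ℝ) ^ (d.1+1) = 2 * 2 ^ d.1 := by ring
  rw [h]
  have h2 : (0:ℝ) < 2 ^ d.1 := by positivity
  have : (d.2:ℝ) / 2 ^ d.1 ≤ (2 * (d.2:ℝ) + 1) / (2 * 2 ^ d.1) := by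
    rw [div_le_div_iff₀ h2 (by positivity)]; nlinarith
  linarith
lemma hi_leftD_le_hi (d : Dy) : hi (leftD d) ≤ hi d := by
  rw [hi_leftD_eq_lo_rightD]
  have := hi_sub_lo (rightD d); have := hi_rightD d
  have := lo_lt_hi (rightD d); linarith

lemma tr_leftD_subset (d : Dy) : tr (leftD d) ⊆ tr d := by
  intro q hq; obtain ⟨h1, h2⟩ := hq
  refine ⟨by rwa [lo_leftD] at h1, lt_of_lt_of_le h2 (hi_leftD_le_hi d)⟩

lemma tr_rightD_subset (d : Dy) : tr (rightD d) ⊆ tr d := by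
  intro q hq; obtain ⟨h1, h2⟩ := hq
  constructor
  · exact lt_of_le_of_lt (lo_le_lo_rightD d) h1
  · rwa [hi_rightD] at h2

lemma tr_left_right_disj (d : Dy) (q : ℚ) (h1 : q ∈ tr (leftD d)) (h2 : q ∈ tr (rightD d)) :
    False := by
  have a := h1.2; have b := h2.1
  rw [hi_leftD_eq_lo_rightD] at a; linarith

def avoidHalf (r : ℚ) (d : Dy) : Dy :=
  if r ∈ tr (leftD d) then rightD d else leftD d

lemma avoidHalf_subset (r : ℚ) (d : Dy) : tr (avoidHalf r d) ⊆ tr d := by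
  unfold avoidHalf; split
  · exact tr_rightD_subset d
  · exact tr_leftD_subset d

lemma avoidHalf_not_mem (r : ℚ) (d : Dy) : r ∉ tr (avoidHalf r d) := by
  unfold avoidHalf; split
  · intro h; exact tr_left_right_disj d r (by assumption) h
  · intro h; exact (by assumption : ¬ _) h

lemma avoidHalf_lvl (r : ℚ) (d : Dy) : (avoidHalf r d).1 = d.1 + 1 := by
  unfold avoidHalf; split <;> rfl

/-- nested or disjoint -/
lemma nested_or_disjoint (d e : Dy) (h : d.1 ≤ e.1) :
    tr e ⊆ tr d ∨ ∀ q ∈ tr e, q ∉ tr d := by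
  set Δ := e.1 - d.1 with hΔ
  have heq : e.1 = d.1 + Δ := by omega
  have hpow : (2:ℝ) ^ e.1 = 2 ^ d.1 * 2 ^ Δ := by rw [heq]; ring
  have hp1 : (0:ℝ) < 2 ^ d.1 := by positivity
  have hp2 : (0:ℝ) < 2 ^ Δ := by positivity
  have hp3 : (0:ℝ) < 2 ^ e.1 := by positivity
  by_cases h1 : e.2 < d.2 * 2 ^ Δ
  · right; intro q hq hq'
    -- hi e ≤ lo d
    have : (e.2 : ℝ) + 1 ≤ (d.2 : ℝ) * 2 ^ Δ := by
      have : (e.2 : ℤ) + 1 ≤ d.2 * 2 ^ Δ := by omega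
      exact_mod_cast this
    have hle : hi e ≤ lo d := by
      unfold hi lo
      have : ((e.2:ℝ) + 1) / 2 ^ e.1 ≤ (d.2:ℝ) / 2 ^ d.1 := by
        rw [hpow, div_le_div_iff₀ (by positivity) hp1]
        calc ((e.2:ℝ) + 1) * 2 ^ d.1 ≤ (d.2:ℝ) * 2 ^ Δ * 2 ^ d.1 := by nlinarith
          _ = (d.2:ℝ) * (2 ^ d.1 * 2 ^ Δ) := by ring
      linarith
    exact absurd hq'.1 (by linarith [hq.2])
  · by_cases h2 : (d.2 + 1) * 2 ^ Δ ≤ e.2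
    · right; intro q hq hq'
      have : ((d.2 : ℝ) + 1) * 2 ^ Δ ≤ (e.2 : ℝ) := by exact_mod_cast h2
      have hle : hi d ≤ lo e := by
        unfold hi lo
        have : ((d.2:ℝ) + 1) / 2 ^ d.1 ≤ (e.2:ℝ) / 2 ^ e.1 := by
          rw [hpow, div_le_div_iff₀ hp1 (by positivity)]
          calc ((d.2:ℝ) + 1) * (2 ^ d.1 * 2 ^ Δ) = ((d.2:ℝ)+1) * 2 ^ Δ * 2 ^ d.1 := by ring
            _ ≤ (e.2:ℝ) * 2 ^ d.1 := by nlinarith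
        linarith
      exact absurd hq.1 (by linarith [hq'.2])
    · left
      push_neg at h1 h2
      have ha : (d.2 : ℝ) * 2 ^ Δ ≤ (e.2 : ℝ) := by exact_mod_cast h1
      have hb : (e.2 : ℝ) + 1 ≤ ((d.2 : ℝ) + 1) * 2 ^ Δ := by
        have : (e.2 : ℤ) + 1 ≤ (d.2 + 1) * 2 ^ Δ := by omega
        exact_mod_cast this
      intro q hq
      constructor
      · have : lo d ≤ lo e := by
          unfold lo
          have : (d.2:ℝ) / 2 ^ d.1 ≤ (e.2:ℝ) / 2 ^ e.1 := by
            rw [hpow, div_le_div_iff₀ hp1 (by positivity)]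
            calc (d.2:ℝ) * (2 ^ d.1 * 2 ^ Δ) = (d.2:ℝ) * 2 ^ Δ * 2 ^ d.1 := by ring
              _ ≤ (e.2:ℝ) * 2 ^ d.1 := by nlinarith
          linarith
        exact lt_of_le_of_lt this hq.1
      · have : hi e ≤ hi d := by
          unfold hi
          have : ((e.2:ℝ)+1) / 2 ^ e.1 ≤ ((d.2:ℝ)+1) / 2 ^ d.1 := by
            rw [hpow, div_le_div_iff₀ (by positivity) hp1]
            calc ((e.2:ℝ)+1) * 2 ^ d.1 ≤ ((d.2:ℝ)+1) * 2 ^ Δ * 2 ^ d.1 := by nlinarith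
              _ = ((d.2:ℝ)+1) * (2 ^ d.1 * 2 ^ Δ) := by ring
          linarith
        exact lt_of_lt_of_le hq.2 this

/-- level monotonicity -/
lemma lvl_mono {d e : Dy} (h : tr d ⊆ tr e) : e.1 ≤ d.1 := by
  by_contra hc
  push_neg at hc  -- d.1 < e.1
  have hw : (1:ℝ) / 2 ^ e.1 ≤ (1 / 2 ^ d.1) / 2 := by
    rw [div_div]
    rw [div_le_div_iff₀ (by positivity) (by positivity)]
    have : (2:ℝ) ^ (d.1 + 1) ≤ 2 ^ e.1 := by
      apply pow_le_pow_right₀ (by norm_num); omega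
    calc (1:ℝ) * (2 ^ d.1 * 2) = 2 ^ (d.1+1) := by ring
      _ ≤ 2 ^ e.1 := this
      _ = 1 * 2 ^ e.1 := by ring
  have hwd : (0:ℝ) < 1 / 2 ^ d.1 := by positivity
  obtain ⟨q1, hq1a, hq1b⟩ := exists_rat_btwn (show lo d < lo d + (1/2^d.1)/4 by linarith)
  obtain ⟨q2, hq2a, hq2b⟩ := exists_rat_btwn (show hi d - (1/2^d.1)/4 < hi d by linarith)
  have hslo := hi_sub_lo d
  have hq1 : (q1 : ℚ) ∈ tr d := ⟨hq1a, by linarith⟩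
  have hq2 : (q2 : ℚ) ∈ tr d := ⟨by linarith, hq2b⟩
  have he1 := h hq1
  have he2 := h hq2
  have hsle := hi_sub_lo e
  -- q2 - q1 > w/2  but q2 - q1 < 1/2^e.1 ≤ w/2
  have : (q2:ℝ) - q1 < 1 / 2 ^ e.1 := by
    have := he1.1; have := he2.2; linarith
  linarith

lemma same_lvl_eq {d e : Dy} (h : tr d ⊆ tr e) (hl : d.1 = e.1) : d = e := by
  obtain ⟨q, hq⟩ := tr_nonempty d
  have hq' := h hq
  have h1 := hq.1; have h2 := hq.2
  have h3 := hq'.1; have h4 := hq'.2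
  simp only [lo, hi] at h1 h2 h3 h4
  rw [hl] at h1 h2
  have hp : (0:ℝ) < 2 ^ e.1 := by positivity
  have hd2 : d.2 = e.2 := by
    have c1 : (d.2 : ℝ) < (e.2 : ℝ) + 1 := by
      have a1 : (d.2:ℝ) / 2^e.1 < ((e.2:ℝ)+1)/2^e.1 := by linarith
      have := (div_lt_div_iff₀ hp hp).mp a1; nlinarith
    have c2 : (e.2 : ℝ) < (d.2 : ℝ) + 1 := by
      have a1 : (e.2:ℝ) / 2^e.1 < ((d.2:ℝ)+1)/2^e.1 := by linarith
      have := (div_lt_div_iff₀ hp hp).mp a1; nlinarith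
    have : (d.2 : ℤ) < e.2 + 1 := by exact_mod_cast c1
    have : (e.2 : ℤ) < d.2 + 1 := by exact_mod_cast c2
    omega
  exact Prod.ext hl hd2

lemma mem_tr_floor (q : ℚ) (m : ℕ) : q ∈ tr (m, ⌊((q:ℝ) - al) * 2 ^ m⌋) := by
  set k : ℤ := ⌊((q:ℝ) - al) * 2 ^ m⌋ with hk
  have hp : (0:ℝ) < 2 ^ m := by positivity
  have h2m : (2:ℝ) ^ m ≠ 0 := ne_of_gt hp
  have h1 : (k:ℝ) ≤ ((q:ℝ) - al) * 2 ^ m := Int.floor_le _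
  have h2 : ((q:ℝ) - al) * 2 ^ m < k + 1 := Int.lt_floor_add_one _
  have hne : (k:ℝ) ≠ ((q:ℝ) - al) * 2 ^ m := by
    intro hEq
    apply al_irr
    have h5 : (k:ℝ) / 2 ^ m = (q:ℝ) - al := by rw [div_eq_iff h2m]; linarith
    refine ⟨q - (k:ℚ) / 2 ^ m, ?_⟩
    push_cast
    linarith
  constructor
  · show al + (k:ℝ) / 2 ^ m < q
    have hlt : (k:ℝ) < ((q:ℝ) - al) * 2 ^ m := lt_of_le_of_ne h1 hne
    have := (div_lt_iff₀ hp).mpr hlt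
    linarith
  · show (q:ℝ) < al + ((k:ℝ) + 1) / 2 ^ m
    have := (lt_div_iff₀ hp).mpr h2
    linarith

/-- any point of an open set lies in an arbitrarily deep dyadic trace inside it -/
lemma exists_dyad_in_open (U : Set ℚ) (hU : IsOpen U) (q : ℚ) (hq : q ∈ U) (m₀ : ℕ) :
    ∃ d : Dy, m₀ ≤ d.1 ∧ q ∈ tr d ∧ tr d ⊆ U := by
  obtain ⟨ε, hε, hball⟩ := Metric.isOpen_iff.mp hU q hq
  obtain ⟨m₁, hm₁⟩ := exists_pow_lt_of_lt_one hε (show (1:ℝ)/2 < 1 by norm_num)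
  set m := max m₀ m₁ with hm
  have hmm : ((1:ℝ)/2) ^ m ≤ ((1:ℝ)/2) ^ m₁ :=
    pow_le_pow_of_le_one (by norm_num) (by norm_num) (le_max_right _ _)
  have hsm : (1:ℝ) / 2 ^ m < ε := by
    calc (1:ℝ) / 2 ^ m = ((1:ℝ)/2) ^ m := by rw [div_pow]; norm_num
      _ ≤ ((1:ℝ)/2) ^ m₁ := hmm
      _ < ε := hm₁
  set k : ℤ := ⌊((q:ℝ) - al) * 2 ^ m⌋ with hk
  have hqtr : q ∈ tr (m, k) := mem_tr_floor q m
  refine ⟨(m, k), le_max_left _ _, hqtr, ?_⟩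
  intro x hx
  apply hball
  rw [Metric.mem_ball, ← Rat.dist_cast, Real.dist_eq]
  have hw := hi_sub_lo (m, k)
  have h1 : lo (m,k) < (x:ℝ) := hx.1
  have h2 : (x:ℝ) < hi (m,k) := hx.2
  have h3 : lo (m,k) < (q:ℝ) := hqtr.1
  have h4 : (q:ℝ) < hi (m,k) := hqtr.2
  have : |(x:ℝ) - (q:ℝ)| < 1 / 2 ^ m := by
    rw [abs_lt]; constructor <;> nlinarith
  linarith


section Ideal
variable {X : Type} [Countable X] {I : Set (Set X)}

lemma lemA (hempty : ∅ ∈ I)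
    (hdown : ∀ A ∈ I, ∀ B : Set X, B ⊆ A → B ∈ I)
    {Y : Set X} (hY : Y ∉ I)
    (τ : List (Set X) → Set X → X)
    (hleg : ∀ (prev : List (Set X)) (A : Set X),
          (∀ B ∈ prev, B ∈ I ∧ B ⊆ Y) → A ∈ I → A ⊆ Y → τ prev A ∈ Y \ A)
    (hwin : ∀ A : ℕ → Set X, (∀ n, A n ∈ I ∧ A n ⊆ Y) →
          Set.range (fun n => τ ((List.range n).map A) (A n)) ∉ I) :
    ∃ Z : ℕ → Set X, (∀ n, Z n ∉ I ∧ Z n ⊆ Y) ∧ ∀ A ∈ I, ∃ n, Z n ∩ A = ∅ := by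
  classical
  set N : List (Set X) → Set X := fun p => {x | ∃ A, A ∈ I ∧ A ⊆ Y ∧ τ p A = x} with hN
  have hNsub : ∀ p, (∀ B ∈ p, B ∈ I ∧ B ⊆ Y) → N p ⊆ Y := by
    rintro p hp x ⟨A, hA, hAY, hx⟩
    have h := hleg p A hp hA hAY
    rw [hx] at h
    exact h.1
  have hNpos : ∀ p, (∀ B ∈ p, B ∈ I ∧ B ⊆ Y) → N p ∉ I := by
    intro p hp hNI
    have hsub := hNsub p hp
    have h1 : τ p (N p) ∈ N p := ⟨N p, hNI, hsub, rfl⟩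
    have h2 := hleg p (N p) hp hNI hsub
    exact h2.2 h1
  set M : List (Set X) → X → Set X := fun p x =>
    if h : ∃ A, A ∈ I ∧ A ⊆ Y ∧ τ p A = x then h.choose else ∅ with hM
  have hMI : ∀ p x, M p x ∈ I ∧ M p x ⊆ Y := by
    intro p x
    simp only [hM]
    split
    · next h => exact ⟨h.choose_spec.1, h.choose_spec.2.1⟩
    · exact ⟨hempty, empty_subset _⟩
  have hMτ : ∀ p x, x ∈ N p → τ p (M p x) = x := by
    intro p x hx
    have hx' : ∃ A, A ∈ I ∧ A ⊆ Y ∧ τ p A = x := hx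
    simp only [hM]
    rw [dif_pos hx']
    exact hx'.choose_spec.2.2
  set P : List X → List (Set X) :=
    fun σ => List.rec ([] : List (Set X)) (fun x _ ih => ih ++ [M ih x]) σ with hP
  have hPcons : ∀ (x : X) (σ : List X), P (x :: σ) = P σ ++ [M (P σ) x] := fun _ _ => rfl
  have hPleg : ∀ σ, ∀ B ∈ P σ, B ∈ I ∧ B ⊆ Y := by
    intro σ
    induction σ with
    | nil => intro B hB; simp [hP] at hB
    | cons x σ ih =>
        intro B hB
        rw [hPcons] at hB
        rcases List.mem_append.mp hB with h | h
        · exact ih B h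
        · rcases List.mem_singleton.mp h with rfl
          exact hMI _ _
  obtain ⟨e, he⟩ := exists_surjective_nat (List X)
  refine ⟨fun n => N (P (e n)), fun n => ⟨hNpos _ (hPleg _), hNsub _ (hPleg _)⟩, ?_⟩
  intro A hA
  by_contra hcon
  push_neg at hcon
  have hA2 : ∀ σ : List X, (N (P σ) ∩ A).Nonempty := by
    intro σ
    obtain ⟨n, hn⟩ := he σ
    rw [← hn]
    exact hcon n
  set pick : List X → X := fun σ => (hA2 σ).some with hpick
  have hpickN : ∀ σ, pick σ ∈ N (P σ) := fun σ => (hA2 σ).some_mem.1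
  have hpickA : ∀ σ, pick σ ∈ A := fun σ => (hA2 σ).some_mem.2
  set σseq : ℕ → List X := fun n => Nat.rec ([] : List X) (fun _ s => pick s :: s) n with hσ
  have hσsucc : ∀ n, σseq (n+1) = pick (σseq n) :: σseq n := fun _ => rfl
  set Am : ℕ → Set X := fun n => M (P (σseq n)) (pick (σseq n)) with hAm
  have hmap : ∀ n, (List.range n).map Am = P (σseq n) := by
    intro n
    induction n with
    | zero => rfl
    | succ n ih =>
        rw [List.range_succ, List.map_append, ih, List.map_singleton, hσsucc, hPcons]
  have hAmleg : ∀ n, Am n ∈ I ∧ Am n ⊆ Y := fun n => hMI _ _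
  have hkey := hwin Am hAmleg
  have heq : (fun n => τ ((List.range n).map Am) (Am n)) = fun n => pick (σseq n) := by
    funext n
    rw [hmap]
    exact hMτ _ _ (hpickN _)
  rw [heq] at hkey
  apply hkey
  apply hdown A hA
  rintro x ⟨n, rfl⟩
  exact hpickA _

end Ideal


section Main

open scoped Classical

variable {X : Type} (I : Set (Set X))

/-- node data -/
structure ND where
  R : Set ℚ
  F : Dy
  hF : tr F ⊆ R
  lv : ℕ
  hFlv : lv ≤ F.1
  Y : Set X
  hY : Y ∉ I

variable (huniv : Set.univ ∉ I)
variable (Z : Set X → ℕ → Set X)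
variable (eQ : ℕ → ℚ) (eT : ℕ → Dy)

def pr (n : ℕ) : ℕ × ℕ := Nat.pairEquiv.symm n

def Cond (nd : ND I) (n : ℕ) (cs : List Dy) : Prop :=
  ∃ W : Dy, nd.lv < W.1 ∧ tr W ⊆ tr (eT (pr n).1) ∧ tr W ⊆ nd.R ∧
    ∀ c ∈ cs, ∀ q ∈ tr W, q ∉ tr c

def Wsel (nd : ND I) (p : List Dy × Dy) (n : ℕ) : Dy :=
  if h : Cond I eT nd n p.1 then h.choose else p.2

def st (nd : ND I) (ℓ : ℕ) : ℕ → List Dy × Dy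
  | 0 => ([], nd.F)
  | (n+1) =>
      (((st nd ℓ n).1 ++ [avoidHalf (eQ ℓ) (leftD (Wsel I eT nd (st nd ℓ n) n))]),
        rightD (Wsel I eT nd (st nd ℓ n) n))

def cD (nd : ND I) (ℓ n : ℕ) : Dy :=
  avoidHalf (eQ ℓ) (leftD (Wsel I eT nd (st I eQ eT nd ℓ n) n))

lemma st_succ (nd : ND I) (ℓ n : ℕ) :
    st I eQ eT nd ℓ (n+1) =
      ((st I eQ eT nd ℓ n).1 ++ [cD I eQ eT nd ℓ n],
        rightD (Wsel I eT nd (st I eQ eT nd ℓ n) n)) := rfl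

/-- combined invariant -/
lemma stInv (nd : ND I) (ℓ : ℕ) : ∀ n : ℕ,
    (nd.lv ≤ (st I eQ eT nd ℓ n).2.1 ∧
     tr (st I eQ eT nd ℓ n).2 ⊆ nd.R ∧
     (∀ c ∈ (st I eQ eT nd ℓ n).1, ∀ q ∈ tr (st I eQ eT nd ℓ n).2, q ∉ tr c)) ∧
    (st I eQ eT nd ℓ n).1 = (List.range n).map (cD I eQ eT nd ℓ) := by
  intro n
  induction n with
  | zero => exact ⟨⟨nd.hFlv, nd.hF, by intro c hc; simp [st] at hc⟩, by simp [st]⟩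
  | succ n ih =>
      obtain ⟨⟨h1, h2, h3⟩, h4⟩ := ih
      -- properties of the selected W
      have hW : nd.lv ≤ (Wsel I eT nd (st I eQ eT nd ℓ n) n).1 ∧
          tr (Wsel I eT nd (st I eQ eT nd ℓ n) n) ⊆ nd.R ∧
          (∀ c ∈ (st I eQ eT nd ℓ n).1,
            ∀ q ∈ tr (Wsel I eT nd (st I eQ eT nd ℓ n) n), q ∉ tr c) := by
        unfold Wsel
        split
        · next h => exact ⟨le_of_lt h.choose_spec.1, h.choose_spec.2.2.1, h.choose_spec.2.2.2⟩
        · exact ⟨h1, h2, fun c hc q hq => h3 c hc q hq⟩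
      obtain ⟨hWl, hWR, hWd⟩ := hW
      rw [st_succ]
      refine ⟨⟨?_, ?_, ?_⟩, ?_⟩
      · simp only [rightD]
        omega
      · exact (tr_rightD_subset _).trans hWR
      · intro c hc q hq
        rcases List.mem_append.mp hc with h | h
        · exact hWd c h q (tr_rightD_subset _ hq)
        · rcases List.mem_singleton.mp h with rfl
          intro hq2
          have hq2' := avoidHalf_subset _ _ hq2
          exact tr_left_right_disj _ q hq2' hq
      · rw [h4, List.range_succ, List.map_append]
        rfl

lemma cD_lvl (nd : ND I) (ℓ n : ℕ) : nd.lv + 2 ≤ (cD I eQ eT nd ℓ n).1 := by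
  have h := (stInv I eQ eT nd ℓ n).1.1
  unfold cD
  rw [avoidHalf_lvl]
  simp only [leftD]
  unfold Wsel
  split
  · next hc =>
      have := hc.choose_spec.1
      omega
  · next hc => omega

lemma cD_sub (nd : ND I) (ℓ n : ℕ) : tr (cD I eQ eT nd ℓ n) ⊆ nd.R := by
  have h := (stInv I eQ eT nd ℓ n).1
  unfold cD
  refine (avoidHalf_subset _ _).trans ((tr_leftD_subset _).trans ?_)
  unfold Wsel
  split
  · next hc => exact hc.choose_spec.2.2.1
  · exact h.2.1

lemma cD_avoid (nd : ND I) (ℓ n : ℕ) : eQ ℓ ∉ tr (cD I eQ eT nd ℓ n) :=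
  avoidHalf_not_mem _ _

lemma cD_disj (nd : ND I) (ℓ : ℕ) {m n : ℕ} (hmn : m < n) :
    ∀ q ∈ tr (cD I eQ eT nd ℓ n), q ∉ tr (cD I eQ eT nd ℓ m) := by
  have h := (stInv I eQ eT nd ℓ n).1
  have h4 := (stInv I eQ eT nd ℓ n).2
  intro q hq
  have hmem : cD I eQ eT nd ℓ m ∈ (st I eQ eT nd ℓ n).1 := by
    rw [h4]
    exact List.mem_map_of_mem (List.mem_range.mpr hmn)
  have hq' : q ∈ tr (Wsel I eT nd (st I eQ eT nd ℓ n) n) :=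
    (tr_leftD_subset _) (avoidHalf_subset _ _ hq)
  -- need: W disjoint from previous children
  have hW : ∀ c ∈ (st I eQ eT nd ℓ n).1,
      ∀ q ∈ tr (Wsel I eT nd (st I eQ eT nd ℓ n) n), q ∉ tr c := by
    unfold Wsel
    split
    · next hc => exact hc.choose_spec.2.2.2
    · exact fun c hc q hq => h.2.2 c hc q hq
  exact hW _ hmem q hq'

lemma cD_serve (nd : ND I) (ℓ n : ℕ)
    (hc : Cond I eT nd n (st I eQ eT nd ℓ n).1) :
    tr (cD I eQ eT nd ℓ n) ⊆ tr (eT (pr n).1) := by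
  unfold cD Wsel
  rw [dif_pos hc]
  exact (avoidHalf_subset _ _).trans ((tr_leftD_subset _).trans hc.choose_spec.2.1)

variable (hZpos : ∀ Y, Y ∉ I → ∀ b, Z Y b ∉ I ∧ Z Y b ⊆ Y)

def root : ND I :=
  ⟨Set.univ, (0, 0), Set.subset_univ _, 0, Nat.zero_le _, Set.univ, huniv⟩

def mkChild (nd : ND I) (ℓ n : ℕ) : ND I where
  R := tr (cD I eQ eT nd ℓ n)
  F := leftD (cD I eQ eT nd ℓ n)
  hF := tr_leftD_subset _
  lv := (cD I eQ eT nd ℓ n).1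
  hFlv := by simp [leftD]
  Y := Z nd.Y (pr n).2
  hY := (hZpos nd.Y nd.hY (pr n).2).1

def data : List ℕ → ND I
  | [] => root I huniv
  | n :: s => mkChild I Z eQ eT hZpos (data s) s.length n


/-- list auxiliary -/
lemma cons_suffix_of_proper {α : Type*} : ∀ {t s : List α}, s <:+ t → s ≠ t → ∃ c, (c :: s) <:+ t := by
  intro t
  induction t with
  | nil =>
      intro s h hne
      rw [List.suffix_nil] at h
      exact absurd h hne
  | cons x t ih =>
      intro s h hne
      rcases List.suffix_cons_iff.mp h with h1 | h1
      · exact absurd h1 hne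
      · by_cases he : s = t
        · subst he
          exact ⟨x, List.suffix_refl _⟩
        · obtain ⟨c, hc⟩ := ih h1 he
          exact ⟨c, hc.trans (List.suffix_cons x t)⟩

local notation "dt" => data I huniv Z eQ eT hZpos

lemma R_cons_sub (n : ℕ) (s : List ℕ) : (dt (n :: s)).R ⊆ (dt s).R :=
  cD_sub I eQ eT (dt s) s.length n

lemma Y_cons_sub (n : ℕ) (s : List ℕ) : (dt (n :: s)).Y ⊆ (dt s).Y :=
  (hZpos (dt s).Y (dt s).hY (pr n).2).2

lemma R_suffix {t s : List ℕ} (h : t <:+ s) : (dt s).R ⊆ (dt t).R := by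
  induction s with
  | nil => rw [List.suffix_nil] at h; subst h; exact subset_rfl
  | cons n s ih =>
      rcases List.suffix_cons_iff.mp h with h1 | h1
      · subst h1; exact subset_rfl
      · exact (R_cons_sub I huniv Z eQ eT hZpos n s).trans (ih h1)

lemma Y_suffix {t s : List ℕ} (h : t <:+ s) : (dt s).Y ⊆ (dt t).Y := by
  induction s with
  | nil => rw [List.suffix_nil] at h; subst h; exact subset_rfl
  | cons n s ih =>
      rcases List.suffix_cons_iff.mp h with h1 | h1
      · subst h1; exact subset_rfl
      · exact (Y_cons_sub I huniv Z eQ eT hZpos n s).trans (ih h1)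

lemma R_open (s : List ℕ) : IsOpen (dt s).R := by
  cases s with
  | nil => exact isOpen_univ
  | cons n s => exact tr_open _

lemma R_ne (s : List ℕ) : (dt s).R.Nonempty := by
  cases s with
  | nil => exact ⟨0, trivial⟩
  | cons n s => exact tr_nonempty _

lemma mem_ne (s : List ℕ) (q : ℚ) (h : q ∈ (dt s).R) : ∀ ℓ < s.length, eQ ℓ ≠ q := by
  induction s with
  | nil => intro ℓ hℓ; simp at hℓ
  | cons n s ih =>
      intro ℓ hℓ
      simp only [List.length_cons] at hℓ
      by_cases he : ℓ = s.length
      · subst he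
        intro hEq
        exact cD_avoid I eQ eT (dt s) s.length n (hEq ▸ h)
      · exact ih (R_cons_sub I huniv Z eQ eT hZpos n s h) ℓ (by omega)

lemma sib {n m : ℕ} (s : List ℕ) (q : ℚ) (h1 : q ∈ (dt (n :: s)).R)
    (h2 : q ∈ (dt (m :: s)).R) : n = m := by
  rcases lt_trichotomy n m with h | h | h
  · exact absurd h1 (cD_disj I eQ eT (dt s) s.length h q h2)
  · exact h
  · exact absurd h2 (cD_disj I eQ eT (dt s) s.length h q h1)

lemma comp (q : ℚ) : ∀ s t : List ℕ, q ∈ (dt s).R → q ∈ (dt t).R →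
    t <:+ s ∨ s <:+ t := by
  intro s
  induction s with
  | nil => intro t _ _; exact Or.inr (List.nil_suffix)
  | cons n s ih =>
      intro t hs ht
      rcases ih t (R_cons_sub I huniv Z eQ eT hZpos n s hs) ht with h | h
      · exact Or.inl (h.trans (List.suffix_cons n s))
      · by_cases he : s = t
        · subst he
          exact Or.inl (List.suffix_cons n s)
        · obtain ⟨c, hc⟩ := cons_suffix_of_proper h he
          have hqc : q ∈ (dt (c :: s)).R := R_suffix I huniv Z eQ eT hZpos hc ht
          have hnc := sib I huniv Z eQ eT hZpos s q hs hqc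
          subst hnc
          exact Or.inr hc

lemma serveStep (heT : Function.Surjective eT) (T : Dy) (s : List ℕ)
    (h : tr T ⊆ (dt s).R) :
    (∃ t, (dt t).R ⊆ tr T) ∨
    ∃ m, tr T ⊆ (dt (m :: s)).R ∧ (dt s).lv + 2 ≤ (dt (m :: s)).lv ∧
      (dt (m :: s)).lv ≤ T.1 := by
  obtain ⟨a, ha⟩ := heT T
  set n := Nat.pairEquiv (a, 0) with hn
  have hpra : (pr n).1 = a := by simp [pr, hn]
  set nd := dt s with hnd
  by_cases hc : Cond I eT nd n (st I eQ eT nd s.length n).1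
  · left
    refine ⟨n :: s, ?_⟩
    have h2 := cD_serve I eQ eT nd s.length n hc
    rw [hpra, ha] at h2
    exact h2
  · have hcov : tr T ⊆ ⋃ m ∈ Finset.range n, tr (cD I eQ eT nd s.length m) := by
      by_contra hnc
      rw [Set.not_subset] at hnc
      obtain ⟨q, hqT, hqn⟩ := hnc
      have hU : IsOpen (tr T ∩ ⋂ m ∈ Finset.range n, (tr (cD I eQ eT nd s.length m))ᶜ) :=
        (tr_open T).inter (isOpen_biInter_finset fun m _ => (tr_closed _).isOpen_compl)
      have hqU : q ∈ tr T ∩ ⋂ m ∈ Finset.range n, (tr (cD I eQ eT nd s.length m))ᶜ := by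
        refine ⟨hqT, ?_⟩
        simp only [Set.mem_iInter, Set.mem_compl_iff]
        intro m hm hqm
        exact hqn (Set.mem_biUnion hm hqm)
      obtain ⟨W, hWl, hWq, hWsub⟩ := exists_dyad_in_open _ hU q hqU (nd.lv + 1)
      apply hc
      refine ⟨W, by omega, ?_, ?_, ?_⟩
      · rw [hpra, ha]; exact fun x hx => (hWsub hx).1
      · exact fun x hx => h ((hWsub hx).1)
      · intro c hcs x hx
        have h4 := (stInv I eQ eT nd s.length n).2
        rw [h4] at hcs
        obtain ⟨m, hm, rfl⟩ := List.mem_map.mp hcs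
        have h5 := (hWsub hx).2
        simp only [Set.mem_iInter, Set.mem_compl_iff] at h5
        exact h5 m (Finset.mem_range.mpr (List.mem_range.mp hm))
    obtain ⟨q0, hq0⟩ := tr_nonempty T
    have hq0' := hcov hq0
    simp only [Set.mem_iUnion, Set.mem_compl_iff, exists_prop] at hq0'
    obtain ⟨m, hmn, hq0m⟩ := hq0'
    rcases le_total T.1 (cD I eQ eT nd s.length m).1 with hl | hl
    · rcases nested_or_disjoint T (cD I eQ eT nd s.length m) hl with hsub | hdisj
      · left; exact ⟨m :: s, hsub⟩
      · exact absurd hq0 (hdisj q0 hq0m)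
    · rcases nested_or_disjoint (cD I eQ eT nd s.length m) T hl with hsub | hdisj
      · right
        refine ⟨m, hsub, cD_lvl I eQ eT nd s.length m, lvl_mono hsub⟩
      · exact absurd hq0m (hdisj q0 hq0)

lemma serve (heT : Function.Surjective eT) (T : Dy) : ∃ t, (dt t).R ⊆ tr T := by
  suffices h : ∀ k (s : List ℕ), tr T ⊆ (dt s).R → T.1 ≤ (dt s).lv + k →
      ∃ t, (dt t).R ⊆ tr T by
    exact h T.1 [] (Set.subset_univ _) (by simp [data, root])
  intro k
  induction k with
  | zero =>
      intro s hs hk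
      rcases serveStep I huniv Z eQ eT hZpos heT T s hs with h | ⟨m, h1, h2, h3⟩
      · exact h
      · omega
  | succ k ih =>
      intro s hs hk
      rcases serveStep I huniv Z eQ eT hZpos heT T s hs with h | ⟨m, h1, h2, h3⟩
      · exact h
      · exact ih (m :: s) h1 (by omega)

def desc (q : ℚ) : ℕ → List ℕ → List ℕ
  | 0, s => s
  | (fuel+1), s =>
      if h : ∃ n, q ∈ (dt (n :: s)).R then desc q fuel (h.choose :: s) else s

variable (heQ : Function.Surjective eQ)

def iQ (q : ℚ) : ℕ := (heQ q).choose

lemma iQ_spec (q : ℚ) : eQ (iQ eQ heQ q) = q := (heQ q).choose_spec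

lemma len_le (s : List ℕ) (q : ℚ) (h : q ∈ (dt s).R) :
    s.length ≤ iQ eQ heQ q := by
  by_contra hb
  push_neg at hb
  exact mem_ne I huniv Z eQ eT hZpos s q h _ hb (iQ_spec eQ heQ q)

lemma desc_spec (q : ℚ) : ∀ (fuel : ℕ) (s : List ℕ), q ∈ (dt s).R →
    iQ eQ heQ q + 1 ≤ fuel + s.length →
    q ∈ (dt (desc I huniv Z eQ eT hZpos q fuel s)).R ∧
      ∀ n, q ∉ (dt (n :: desc I huniv Z eQ eT hZpos q fuel s)).R := by
  intro fuel
  induction fuel with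
  | zero =>
      intro s h hb
      have := len_le I huniv Z eQ eT hZpos heQ s q h
      omega
  | succ fuel ih =>
      intro s h hb
      simp only [desc]
      split
      · next hex =>
          exact ih _ hex.choose_spec (by simp only [List.length_cons]; omega)
      · next hex =>
          push_neg at hex
          exact ⟨h, hex⟩

def nodeOf (q : ℚ) : List ℕ :=
  desc I huniv Z eQ eT hZpos q (iQ eQ heQ q + 1) []

lemma nodeOf_spec (q : ℚ) :
    q ∈ (dt (nodeOf I huniv Z eQ eT hZpos heQ q)).R ∧
      ∀ n, q ∉ (dt (n :: nodeOf I huniv Z eQ eT hZpos heQ q)).R :=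
  desc_spec I huniv Z eQ eT hZpos heQ q _ [] trivial (by simp)

lemma max_node (q : ℚ) (t : List ℕ) (h : q ∈ (dt t).R) :
    t <:+ nodeOf I huniv Z eQ eT hZpos heQ q := by
  set s0 := nodeOf I huniv Z eQ eT hZpos heQ q with hs0
  rcases comp I huniv Z eQ eT hZpos q s0 t (nodeOf_spec I huniv Z eQ eT hZpos heQ q).1 h
    with h1 | h1
  · exact h1
  · by_cases he : s0 = t
    · rw [← he]
    · obtain ⟨c, hc⟩ := cons_suffix_of_proper h1 he
      have hqc : q ∈ (dt (c :: s0)).R := R_suffix I huniv Z eQ eT hZpos hc h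
      exact absurd hqc ((nodeOf_spec I huniv Z eQ eT hZpos heQ q).2 c)

variable (hempty : ∅ ∈ I)

include hempty in
lemma Ynon (s : List ℕ) : (dt s).Y.Nonempty :=
  Set.nonempty_iff_ne_empty.mpr (fun he => (dt s).hY (he ▸ hempty))

def ff (q : ℚ) : X :=
  (Ynon I huniv Z eQ eT hZpos hempty (nodeOf I huniv Z eQ eT hZpos heQ q)).some

lemma ff_mem (q : ℚ) :
    ff I huniv Z eQ eT hZpos heQ hempty q ∈ (dt (nodeOf I huniv Z eQ eT hZpos heQ q)).Y :=
  Set.Nonempty.some_mem _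

lemma avoidAll (hZav : ∀ Y, Y ∉ I → ∀ A ∈ I, ∃ b, Z Y b ∩ A = ∅)
    (A : Set X) (hA : A ∈ I) (t₀ : List ℕ) :
    ∃ t : List ℕ, (dt t).R ⊆ (dt t₀).R ∧
      ∀ q ∈ (dt t).R, ff I huniv Z eQ eT hZpos heQ hempty q ∉ A := by
  obtain ⟨b, hb⟩ := hZav (dt t₀).Y (dt t₀).hY A hA
  refine ⟨Nat.pairEquiv (0, b) :: t₀, R_cons_sub I huniv Z eQ eT hZpos _ _, ?_⟩
  intro q hq hfA
  have ht := max_node I huniv Z eQ eT hZpos heQ q (Nat.pairEquiv (0, b) :: t₀) hq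
  have h1 := ff_mem I huniv Z eQ eT hZpos heQ hempty q
  have h2 := Y_suffix I huniv Z eQ eT hZpos ht h1
  have h3 : (dt (Nat.pairEquiv (0, b) :: t₀)).Y = Z (dt t₀).Y b := by
    show Z (dt t₀).Y (pr (Nat.pairEquiv (0, b))).2 = Z (dt t₀).Y b
    simp [pr]
  rw [h3] at h2
  have : ff I huniv Z eQ eT hZpos heQ hempty q ∈ Z (dt t₀).Y b ∩ A := ⟨h2, hfA⟩
  rw [hb] at this
  exact this

theorem mainThm (hZav : ∀ Y, Y ∉ I → ∀ A ∈ I, ∃ b, Z Y b ∩ A = ∅)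
    (heT : Function.Surjective eT) (A : Set X) (hA : A ∈ I) :
    interior (closure ((ff I huniv Z eQ eT hZpos heQ hempty) ⁻¹' A)) = (∅ : Set ℚ) := by
  rw [Set.eq_empty_iff_forall_notMem]
  intro q hq
  obtain ⟨T, _, hqT, hTU⟩ := exists_dyad_in_open _ isOpen_interior q hq 0
  obtain ⟨s0, hs0⟩ := serve I huniv Z eQ eT hZpos heT T
  obtain ⟨t, htsub, hav⟩ := avoidAll I huniv Z eQ eT hZpos heQ hempty hZav A hA s0
  obtain ⟨q1, hq1⟩ := R_ne I huniv Z eQ eT hZpos t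
  have h1 : q1 ∈ closure ((ff I huniv Z eQ eT hZpos heQ hempty) ⁻¹' A) :=
    interior_subset (hTU (hs0 (htsub hq1)))
  obtain ⟨q2, hq2R, hq2A⟩ :=
    mem_closure_iff.mp h1 _ (R_open I huniv Z eQ eT hZpos t) hq1
  exact hav q2 hq2R hq2A

end Main

end S14


/-- Let `I` be an ideal on a countable set `X`. If for every `Y ∈ I⁺`
Player II has a winning strategy in `G_Cat(I↾Y)`, then `I ≤_K nwd`: there is
`f : ℚ → X` with `f⁻¹(A)` nowhere dense in `ℚ` for every `A ∈ I`.

A strategy for Player II is encoded as a function `τ` of the finite sequence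
`⟨A₀,…,A_{n-1}⟩` of Player I's earlier moves together with his current move `A_n`;
legality says the response lies in `Y ∖ A_n` whenever all moves belong to `I↾Y`,
and winning says the set of responses to any run is `(I↾Y)`-positive (not in `I`). -/
theorem stmt_14 (X : Type) [Countable X] (I : Set (Set X))
    (hempty : ∅ ∈ I) (huniv : Set.univ ∉ I)
    (hdown : ∀ A ∈ I, ∀ B : Set X, B ⊆ A → B ∈ I)
    (hunion : ∀ A ∈ I, ∀ B ∈ I, A ∪ B ∈ I)
    (hwin : ∀ Y : Set X, Y ∉ I →
      ∃ τ : List (Set X) → Set X → X,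
        (∀ (prev : List (Set X)) (A : Set X),
          (∀ B ∈ prev, B ∈ I ∧ B ⊆ Y) → A ∈ I → A ⊆ Y → τ prev A ∈ Y \ A) ∧
        (∀ A : ℕ → Set X, (∀ n, A n ∈ I ∧ A n ⊆ Y) →
          Set.range (fun n => τ ((List.range n).map A) (A n)) ∉ I)) :
    ∃ f : ℚ → X, ∀ A ∈ I, interior (closure (f ⁻¹' A)) = (∅ : Set ℚ) := by
  classical
  obtain ⟨eQ, heQ⟩ := exists_surjective_nat ℚ
  obtain ⟨eT, heT⟩ := exists_surjective_nat S14.Dy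
  set Zfun : Set X → ℕ → Set X := fun Y =>
    if h : Y ∉ I then
      (S14.lemA hempty hdown h (hwin Y h).choose (hwin Y h).choose_spec.1
        (hwin Y h).choose_spec.2).choose
    else fun _ => ∅ with hZfun
  have hZpos : ∀ Y, Y ∉ I → ∀ b, Zfun Y b ∉ I ∧ Zfun Y b ⊆ Y := by
    intro Y hY b
    simp only [hZfun, dif_pos hY]
    exact (S14.lemA hempty hdown hY (hwin Y hY).choose (hwin Y hY).choose_spec.1
        (hwin Y hY).choose_spec.2).choose_spec.1 b
  have hZav : ∀ Y, Y ∉ I → ∀ A ∈ I, ∃ b, Zfun Y b ∩ A = ∅ := by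
    intro Y hY
    simp only [hZfun, dif_pos hY]
    exact (S14.lemA hempty hdown hY (hwin Y hY).choose (hwin Y hY).choose_spec.1
        (hwin Y hY).choose_spec.2).choose_spec.2
  exact ⟨S14.ff I huniv Zfun eQ eT hZpos heQ hempty,
    fun A hA => S14.mainThm I huniv Zfun eQ eT hZpos heQ hempty hZav heT A hA⟩
end
end

section
/- Let I be an ideal on ℕ and let F : ℕ^ℕ → I⁺ be a continuous surjection (where I⁺ is viewed inside the Cantor space 2^ℕ via characteristic functions). If Player I has a winning strategy in the game H_Cat(I,F), then Player I has a winning strategy in the game G_Cat(I). -/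
open Classical in
/-- Identification of subsets of `ℕ` with points of the Cantor space `2^ℕ` via
characteristic functions. -/
noncomputable def chi (A : Set ℕ) : ℕ → Bool := fun n => decide (n ∈ A)

/-- Given Player II's second coordinates `m : ℕ → ℤ` (with `-1` meaning "no move"),
`tildeg m ∈ ℕ^ℕ` is obtained by deleting the `-1`s and compressing: `tildeg m i = m nᵢ`
where `n₀ < n₁ < …` enumerates `{n : m n ≠ -1}`. -/
noncomputable def tildeg (m : ℕ → ℤ) : ℕ → ℕ :=
  fun i => (m (Nat.nth (fun n => m n ≠ -1) i)).toNat

/-- auxiliary: finite unions of ideal members are in the ideal -/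
lemma stmt16_finUnion (I : Set (Set ℕ)) (hempty : ∅ ∈ I)
    (hunion : ∀ A ∈ I, ∀ B ∈ I, A ∪ B ∈ I)
    {α : Type*} (s : Finset α) (f : α → Set ℕ) (hf : ∀ a, f a ∈ I) :
    (⋃ a ∈ s, f a) ∈ I := by
  classical
  induction s using Finset.induction_on with
  | empty => simpa using hempty
  | insert _ _ h ih =>
    rw [Finset.set_biUnion_insert]
    exact hunion _ (hf _) _ ih

/-- auxiliary: decode a finitary move vector into a legal `ℕ → ℤ` move sequence -/
noncomputable def stmt16_enc (n : ℕ) (m : Fin n → Fin (n + 1)) : ℕ → ℤ :=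
  fun i => if h : i < n then ((min ((m ⟨i, h⟩ : ℕ)) i : ℕ) : ℤ) - 1 else -1

/-- Let `I` be an ideal on `ℕ` and `F : ℕ^ℕ → I⁺` a continuous surjection.
If Player I has a winning strategy in `H_Cat(I,F)`, then Player I has a winning strategy
in `G_Cat(I)`. Strategies for Player I are maps from finite sequences of Player II's
previous moves into `I`; a run is legal if each of Player II's moves avoids the set just
played by Player I (and, in `H_Cat`, satisfies `-1 ≤ m_n < n`); a strategy of Player I is
winning if Player II wins no legal run against it. -/
theorem stmt_16 (I : Set (Set ℕ))
    (hempty : ∅ ∈ I) (huniv : Set.univ ∉ I)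
    (hdown : ∀ A ∈ I, ∀ B : Set ℕ, B ⊆ A → B ∈ I)
    (hunion : ∀ A ∈ I, ∀ B ∈ I, A ∪ B ∈ I)
    (F : (ℕ → ℕ) → Set ℕ)
    (hFpos : ∀ x, F x ∉ I)
    (hFcont : Continuous (fun x => chi (F x)))
    (hFsurj : ∀ Y : Set ℕ, Y ∉ I → ∃ x, F x = Y)
    (σ : List (ℕ × ℤ) → Set ℕ)
    (hσI : ∀ l, σ l ∈ I)
    (hσwin : ∀ (b : ℕ → ℕ) (m : ℕ → ℤ),
      (∀ n : ℕ, b n ∉ σ ((List.range n).map (fun i => (b i, m i))) ∧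
        -1 ≤ m n ∧ m n < (n : ℤ)) →
      ¬ ({n : ℕ | m n ≠ -1}.Infinite ∧ F (tildeg m) = Set.range b)) :
    ∃ σ' : List ℕ → Set ℕ, (∀ l, σ' l ∈ I) ∧
      ∀ b : ℕ → ℕ, (∀ n, b n ∉ σ' ((List.range n).map b)) → Set.range b ∈ I := by
  classical
  refine ⟨fun l => ⋃ m ∈ (Finset.univ : Finset (Fin l.length → Fin (l.length + 1))),
      σ ((List.range l.length).map
        (fun i => (l.getD i 0, stmt16_enc l.length m i))), ?_, ?_⟩
  · intro l
    exact stmt16_finUnion I hempty hunion _ _ (fun a => hσI _)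
  · intro b hb
    by_contra hbI
    obtain ⟨x, hx⟩ := hFsurj _ hbI
    set s : ℕ → ℕ := fun i => ∑ j ∈ Finset.range (i + 1), (x j + 1) with hs
    have hsmono : StrictMono s := strictMono_nat_of_lt_succ (fun i => by
      simp only [hs, Finset.sum_range_succ]; omega)
    have hxs : ∀ i, x i < s i := by
      intro i
      have : x i + 1 ≤ s i :=
        Finset.single_le_sum (f := fun j => x j + 1) (fun _ _ => Nat.zero_le _)
          (Finset.self_mem_range_succ i)
      omega
    set M : ℕ → ℤ := fun n => if h : ∃ i, s i = n then (x h.choose : ℤ) else -1 with hM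
    have hMs : ∀ i, M (s i) = (x i : ℤ) := by
      intro i
      have h : ∃ j, s j = s i := ⟨i, rfl⟩
      have hcs := h.choose_spec
      simp only [hM, dif_pos h]
      exact_mod_cast congrArg (fun j => ((x j : ℤ))) (hsmono.injective hcs)
    have hMrange : ∀ n, M n ≠ -1 ↔ ∃ i, s i = n := by
      intro n
      constructor
      · intro h; by_contra h'
        simp only [hM, dif_neg h'] at h
        exact h rfl
      · rintro ⟨i, rfl⟩; rw [hMs]; omega
    have hlegal : ∀ n : ℕ, -1 ≤ M n ∧ M n < (n : ℤ) := by
      intro n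
      by_cases h : ∃ i, s i = n
      · obtain ⟨i, rfl⟩ := h
        rw [hMs]
        exact ⟨by omega, by exact_mod_cast hxs i⟩
      · simp only [hM, dif_neg h]
        constructor
        · omega
        · omega
    -- the legality of the run (b, M) against σ
    have hrun : ∀ n : ℕ, b n ∉ σ ((List.range n).map (fun i => (b i, M i))) ∧
        -1 ≤ M n ∧ M n < (n : ℤ) := by
      intro n
      refine ⟨?_, hlegal n⟩
      intro hmem
      have main : ∀ l : List ℕ, l.length = n → (∀ i < n, l.getD i 0 = b i) →
          b n ∈ ⋃ m ∈ (Finset.univ : Finset (Fin l.length → Fin (l.length + 1))),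
            σ ((List.range l.length).map
              (fun i => (l.getD i 0, stmt16_enc l.length m i))) := by
        intro l hl hgd
        subst hl
        set N := l.length with hN
        set m₀ : Fin N → Fin (N + 1) :=
          fun i => ⟨(M i + 1).toNat, by
            have h1 := (hlegal i).1
            have h2 := (hlegal i).2
            have := i.isLt
            omega⟩ with hm₀
        refine Set.mem_iUnion.2 ⟨m₀, Set.mem_iUnion.2 ⟨Finset.mem_univ m₀, ?_⟩⟩
        have hlist : (List.range N).map
            (fun i => (l.getD i 0, stmt16_enc N m₀ i)) =
            (List.range N).map (fun i => (b i, M i)) := by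
          apply List.map_congr_left
          intro i hi
          rw [List.mem_range] at hi
          have henc : stmt16_enc N m₀ i = M i := by
            simp only [stmt16_enc, dif_pos hi]
            have h1 := (hlegal i).1
            have h2 := (hlegal i).2
            have hle : (M i + 1).toNat ≤ i := by omega
            have hmin : ((M i + 1).toNat ⊓ i) = (M i + 1).toNat := min_eq_left hle
            rw [hmin]
            omega
          rw [hgd i hi, henc]
        rw [hlist]
        exact hmem
      exact hb n (main ((List.range n).map b) (by simp)
        (fun i hi => by
          rw [List.getD_eq_getElem _ _ (by simpa using hi)]
          simp))
    -- Player II wins this run: contradiction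
    apply hσwin b M hrun
    have hset : {n : ℕ | M n ≠ -1} = Set.range s := by
      ext n; simpa [eq_comm] using hMrange n
    have hsinf : ({n : ℕ | M n ≠ -1} : Set ℕ).Infinite := by
      rw [hset]
      exact Set.infinite_range_of_injective hsmono.injective
    refine ⟨hsinf, ?_⟩
    have hnth : Nat.nth (fun n => M n ≠ -1) = s := by
      have h1 : StrictMono (Nat.nth (fun n => M n ≠ -1)) := Nat.nth_strictMono hsinf
      have h2 : Set.range (Nat.nth (fun n => M n ≠ -1)) = Set.range s := by
        rw [Nat.range_nth_of_infinite hsinf]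
        exact hset
      exact (h1.range_inj hsmono).1 h2
    have : tildeg M = x := by
      funext i
      simp only [tildeg, hnth, hMs]
      exact Int.toNat_natCast _
    rw [this, hx]
end
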